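/- Let N be a nonnegative integer and let 𝓕 be a finite family of rational pointed 2-dimensional cones. Then, up to integral equivalence, there are only finitely many lattice polygons (2-dimensional lattice polytopes) P ⊆ ℝ^2 with exactly N+1 lattice points such that for every vertex u of P the normal cone of P at u is integrally equivalent to a cone belonging to 𝓕. -/

import Mathlib

open Set MeasureTheory
open scoped ENNReal

/-- A point of `ℝ^n` is a lattice point if all coordinates are integers. -/
def IsLatticePoint {n : ℕ} (x : Fin n → ℝ) : Prop := ∀ i, ∃ z : ℤ, x i = (z : ℝ)

/-- The set of lattice points of `ℝ^n`. -/
def LatticePts (n : ℕ) : Set (Fin n → ℝ) := {x | IsLatticePoint x}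

/-- A lattice polytope: the convex hull of finitely many lattice points. -/
def IsLatticePolytope {n : ℕ} (P : Set (Fin n → ℝ)) : Prop :=
  ∃ V : Set (Fin n → ℝ), V.Finite ∧ V.Nonempty ∧ V ⊆ LatticePts n ∧ P = convexHull ℝ V

/-- The dimension of a polytope: the dimension of its affine hull. -/
noncomputable def polyDim {n : ℕ} (P : Set (Fin n → ℝ)) : ℕ :=
  Module.finrank ℝ (affineSpan ℝ P).direction

/-- The tangent cone of `P` at `u`: the cone spanned by `P - u`. -/
def tangentCone {n : ℕ} (P : Set (Fin n → ℝ)) (u : Fin n → ℝ) : Set (Fin n → ℝ) :=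
  {x | ∃ c : ℝ, 0 ≤ c ∧ ∃ p ∈ P, x = c • (p - u)}

/-- Integral equivalence of lattice polytopes: an affine map between the affine hulls
mapping the lattice points of the affine hulls bijectively onto each other and one
polytope onto the other. -/
def PolyEquiv {n n' : ℕ} (P : Set (Fin n → ℝ)) (P' : Set (Fin n' → ℝ)) : Prop :=
  ∃ f : (Fin n → ℝ) →ᵃ[ℝ] (Fin n' → ℝ),
    Set.BijOn f ((affineSpan ℝ P : Set (Fin n → ℝ)) ∩ LatticePts n)
      ((affineSpan ℝ P' : Set (Fin n' → ℝ)) ∩ LatticePts n') ∧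
    f '' P = P'

/-- The cone generated by finitely many vectors: all nonnegative combinations. -/
def coneGen {n m : ℕ} (v : Fin m → Fin n → ℝ) : Set (Fin n → ℝ) :=
  {x | ∃ c : Fin m → ℝ, (∀ i, 0 ≤ c i) ∧ x = ∑ i, c i • v i}

/-- A rational (polyhedral) cone: generated by finitely many integer vectors. -/
def IsRationalCone {n : ℕ} (σ : Set (Fin n → ℝ)) : Prop :=
  ∃ (m : ℕ) (v : Fin m → Fin n → ℤ), σ = coneGen (fun i j => (v i j : ℝ))

/-- A pointed cone contains no nonzero vector together with its negative. -/
def IsPointedCone {n : ℕ} (σ : Set (Fin n → ℝ)) : Prop :=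
  ∀ x ∈ σ, -x ∈ σ → x = 0

/-- The dimension of a cone: the dimension of its linear span. -/
noncomputable def coneDim {n : ℕ} (σ : Set (Fin n → ℝ)) : ℕ :=
  Module.finrank ℝ (Submodule.span ℝ σ)

/-- Integral equivalence of cones: a linear map from span(σ) to span(σ') mapping the
lattice points of span(σ) bijectively onto the lattice points of span(σ') and σ onto σ'. -/
def ConeEquiv {n n' : ℕ} (σ : Set (Fin n → ℝ)) (σ' : Set (Fin n' → ℝ)) : Prop :=
  ∃ L : (Fin n → ℝ) →ₗ[ℝ] (Fin n' → ℝ),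
    Set.BijOn L ((Submodule.span ℝ σ : Set (Fin n → ℝ)) ∩ LatticePts n)
      ((Submodule.span ℝ σ' : Set (Fin n' → ℝ)) ∩ LatticePts n') ∧
    L '' σ = σ'

/-- The normal cone of `P` at `u`: the dual cone of the tangent cone. -/
def normalCone {n : ℕ} (P : Set (Fin n → ℝ)) (u : Fin n → ℝ) : Set (Fin n → ℝ) :=
  {y | ∀ x ∈ tangentCone P u, 0 ≤ ∑ i, x i * y i}

namespace PolygonAux
noncomputable section
abbrev V2 := Fin 2 → ℝ
abbrev Z2 := Fin 2 → ℤ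
def ci (z : Z2) : V2 := fun i => (z i : ℝ)
def dt (x y : Z2) : ℤ := x 0 * y 1 - x 1 * y 0

lemma ci_inj : Function.Injective ci := by
  intro x y h; funext i
  have := congrFun h i
  simp only [ci] at this; exact_mod_cast this

lemma ci_lat (z : Z2) : ci z ∈ LatticePts 2 := fun i => ⟨z i, rfl⟩

lemma dt_combo (a b a' b' : ℤ) (u v : Z2) :
    dt (a • u + b • v) (a' • u + b' • v) = (a * b' - b * a') * dt u v := by
  simp only [dt, Pi.add_apply, Pi.smul_apply, smul_eq_mul]; ring

lemma dt_red_l (z : Z2) (m n : ℤ) (u v x : Z2) :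
    dt (z - m • u - n • v) x = dt z x - m * dt u x - n * dt v x := by
  simp only [dt, Pi.sub_apply, Pi.smul_apply, smul_eq_mul]; ring

lemma dt_red_r (z : Z2) (m n : ℤ) (u v x : Z2) :
    dt x (z - m • u - n • v) = dt x z - m * dt x u - n * dt x v := by
  simp only [dt, Pi.sub_apply, Pi.smul_apply, smul_eq_mul]; ring

lemma dt_uu (u : Z2) : dt u u = 0 := by simp only [dt]; ring

lemma dt_swap (u v : Z2) : dt u v = -dt v u := by simp only [dt]; ring

theorem count_bound {P : Set V2} (u v zp : Z2) {e : ℤ}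
    (he : e = dt u v) (hepos : 0 < e)
    (hT : ∀ z : Z2, 0 ≤ dt z v → 0 ≤ dt u z → dt z v + dt u z ≤ e → ci (zp + z) ∈ P)
    (k : ℕ) (hk : (P ∩ LatticePts 2).ncard = k) (hfin : (P ∩ LatticePts 2).Finite) :
    e ≤ 4 * (k : ℤ) ^ 2 := by
  classical
  set A : Set V2 := P ∩ LatticePts 2 with hA
  have hAfin : Finite A := hfin.to_subtype
  set H : Submodule ℤ Z2 := Submodule.span ℤ ({u, v} : Set Z2) with hH
  set Sz : Set Z2 := {z | 0 ≤ dt z v ∧ dt z v < e ∧ 0 ≤ dt u z ∧ dt u z < e} with hSz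
  -- reduction of any integer point into the parallelogram, modulo H
  have hred : ∀ z : Z2, ∃ w ∈ Sz, z - w ∈ H := by
    intro z
    refine ⟨z - (dt z v / e) • u - (dt u z / e) • v, ⟨?_, ?_, ?_, ?_⟩, ?_⟩
    · rw [dt_red_l, ← he, dt_uu v, mul_zero, sub_zero, mul_comm, ← Int.emod_def]
      exact Int.emod_nonneg _ (ne_of_gt hepos)
    · rw [dt_red_l, ← he, dt_uu v, mul_zero, sub_zero, mul_comm, ← Int.emod_def]
      exact Int.emod_lt_of_pos _ hepos
    · rw [dt_red_r, dt_uu u, mul_zero, sub_zero, ← he, mul_comm, ← Int.emod_def]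
      exact Int.emod_nonneg _ (ne_of_gt hepos)
    · rw [dt_red_r, dt_uu u, mul_zero, sub_zero, ← he, mul_comm, ← Int.emod_def]
      exact Int.emod_lt_of_pos _ hepos
    · have : z - (z - (dt z v / e) • u - (dt u z / e) • v)
          = (dt z v / e) • u + (dt u z / e) • v := by abel
      rw [this]
      exact Submodule.add_mem _
        (Submodule.smul_mem _ _ (Submodule.subset_span (Set.mem_insert _ _)))
        (Submodule.smul_mem _ _ (Submodule.subset_span (Set.mem_insert_of_mem _ rfl)))
  -- injection of the parallelogram lattice points into A × Bool
  have hSzmap : ∀ z ∈ Sz, (if dt z v + dt u z ≤ e then ci (zp + z) else ci (zp + (u + v - z))) ∈ A := by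
    intro z hz
    obtain ⟨h1, h2, h3, h4⟩ := hz
    split_ifs with hc
    · exact ⟨hT z h1 h3 hc, ci_lat _⟩
    · push_neg at hc
      have e1 : dt (u + v - z) v = e - dt z v := by
        rw [he]; simp only [dt, Pi.add_apply, Pi.sub_apply]; ring
      have e2 : dt u (u + v - z) = e - dt u z := by
        rw [he]; simp only [dt, Pi.add_apply, Pi.sub_apply]; ring
      refine ⟨hT _ ?_ ?_ ?_, ci_lat _⟩
      · rw [e1]; omega
      · rw [e2]; omega
      · rw [e1, e2]; omega
  -- `Sz` is finite: inject into A × Bool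
  let χ : Sz → A × Bool := fun z =>
    if hc : dt z.1 v + dt u z.1 ≤ e then
      (⟨ci (zp + z.1), by have := hSzmap z.1 z.2; rwa [if_pos hc] at this⟩, true)
    else
      (⟨ci (zp + (u + v - z.1)), by have := hSzmap z.1 z.2; rwa [if_neg hc] at this⟩, false)
  have hχinj : Function.Injective χ := by
    intro z w hzw
    by_cases hcz : dt z.1 v + dt u z.1 ≤ e <;> by_cases hcw : dt w.1 v + dt u w.1 ≤ e <;>
      simp only [χ, dif_pos, dif_neg, hcz, hcw, Prod.mk.injEq, Subtype.mk.injEq,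
        dite_true, dite_false] at hzw
    · obtain ⟨h, -⟩ := hzw
      have := ci_inj h
      exact Subtype.ext (by have := congrArg (· - zp) this; simpa using this)
    · exact absurd hzw.2 (by simp)
    · exact absurd hzw.2 (by simp)
    · obtain ⟨h, -⟩ := hzw
      have := ci_inj h
      refine Subtype.ext ?_
      have h2 : u + v - z.1 = u + v - w.1 := by
        have := congrArg (· - zp) this; simpa using this
      have := congrArg (fun t => u + v - t) h2
      simpa using this
  have hSzfin : Finite Sz := Finite.of_injective χ hχinj
  -- surjection from Sz onto the quotient
  have hsurj : Function.Surjective (fun z : Sz => Submodule.Quotient.mk (p := H) z.1) := by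
    intro q
    obtain ⟨z, rfl⟩ := Submodule.Quotient.mk_surjective H q
    obtain ⟨w, hw, hzw⟩ := hred z
    exact ⟨⟨w, hw⟩, (Submodule.Quotient.eq H).mpr (by simpa using neg_mem hzw)⟩
  have hQfin : Finite (Z2 ⧸ H) := Finite.of_surjective _ hsurj
  -- cardinality chain
  have hcard1 : Nat.card (Z2 ⧸ H) ≤ Nat.card Sz := Nat.card_le_card_of_surjective _ hsurj
  have hcard2 : Nat.card Sz ≤ Nat.card (A × Bool) := Nat.card_le_card_of_injective χ hχinj
  have hcard3 : Nat.card (A × Bool) = 2 * k := by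
    rw [Nat.card_prod, Nat.card_eq_two_iff.mpr ⟨false, true, by simp, by ext x; cases x <;> simp⟩,
      Nat.card_coe_set_eq, hk]
    ring
  set c : ℕ := Nat.card (Z2 ⧸ H) with hc
  have hcpos : 0 < c := Nat.card_pos
  -- exponent argument
  have hmem : ∀ z : Z2, (c : ℤ) • z ∈ H := by
    intro z
    have h0 : (H.mkQ) ((c : ℤ) • z) = 0 := by
      rw [map_zsmul, natCast_zsmul]
      have := Fintype.ofFinite (Z2 ⧸ H)
      have h := card_nsmul_eq_zero (x := H.mkQ z)
      rwa [← Nat.card_eq_fintype_card] at h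
    rwa [Submodule.mkQ_apply, Submodule.Quotient.mk_eq_zero] at h0
  obtain ⟨a, b, hab⟩ := Submodule.mem_span_pair.mp (hmem ![1, 0])
  obtain ⟨a', b', hab'⟩ := Submodule.mem_span_pair.mp (hmem ![0, 1])
  have hdt : dt ((c:ℤ) • ![1,0]) ((c:ℤ) • ![0,1]) = (c:ℤ)^2 := by
    simp only [dt, Pi.smul_apply, smul_eq_mul, Matrix.cons_val_zero, Matrix.cons_val_one,
      Matrix.head_cons]
    ring
  rw [← hab, ← hab', dt_combo, ← he] at hdt
  -- now (a*b' - b*a') * e = c^2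
  have hck : (c : ℤ) ≤ 2 * k := by
    have : c ≤ 2 * k := le_trans hcard1 (le_trans hcard2 (le_of_eq hcard3))
    exact_mod_cast this
  have hc1 : (1 : ℤ) ≤ c := by exact_mod_cast hcpos
  have h1 : e ≤ (c : ℤ) ^ 2 := by
    have hκ : 1 ≤ a * b' - b * a' := by
      by_contra hcon
      push_neg at hcon
      have h2 : (a * b' - b * a') * e ≤ 0 :=
        mul_nonpos_of_nonpos_of_nonneg (by omega) hepos.le
      nlinarith [hc1]
    nlinarith [hepos]
  nlinarith [hck, hc1]

lemma dt_cramer (u v z : Z2) : ∀ i, dt u v * z i = dt z v * u i + dt u z * v i := by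
  rw [Fin.forall_fin_two]
  constructor <;> · simp only [dt]; ring

lemma combo3 {P : Set V2} (hP : Convex ℝ P) {x y z : V2} (hx : x ∈ P) (hy : y ∈ P)
    (hz : z ∈ P) {w1 w2 w3 : ℝ} (h1 : 0 ≤ w1) (h2 : 0 ≤ w2) (h3 : 0 ≤ w3)
    (hs : w1 + w2 + w3 = 1) : w1 • x + w2 • y + w3 • z ∈ P := by
  rcases eq_or_lt_of_le (add_nonneg h1 h2) with h0 | h0
  · have hw1 : w1 = 0 := by linarith
    have hw2 : w2 = 0 := by linarith
    have hw3 : w3 = 1 := by linarith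
    simp [hw1, hw2, hw3, hz]
  · have hs0 : w1 + w2 ≠ 0 := ne_of_gt h0
    have hxy : (w1 / (w1 + w2)) • x + (w2 / (w1 + w2)) • y ∈ P := by
      refine hP hx hy (div_nonneg h1 h0.le) (div_nonneg h2 h0.le) ?_
      rw [← add_div, div_self hs0]
    have hfin := hP hxy hz h0.le h3 (by linarith)
    have key : (w1 + w2) • ((w1 / (w1 + w2)) • x + (w2 / (w1 + w2)) • y) + w3 • z
        = w1 • x + w2 • y + w3 • z := by
      rw [smul_add, smul_smul, smul_smul, mul_div_cancel₀ _ hs0, mul_div_cancel₀ _ hs0, add_assoc]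
    rwa [key] at hfin

/-- lattice points of the triangle `zp + conv{0, u, v}` lie in any convex `P`
containing the three vertices. -/
lemma triangle_subset {P : Set V2} (hP : Convex ℝ P) (zp zq zr : Z2)
    (hp : ci zp ∈ P) (hq : ci zq ∈ P) (hr : ci zr ∈ P) {e : ℤ}
    (he : e = dt (zq - zp) (zr - zp)) (hepos : 0 < e) :
    ∀ z : Z2, 0 ≤ dt z (zr - zp) → 0 ≤ dt (zq - zp) z →
      dt z (zr - zp) + dt (zq - zp) z ≤ e → ci (zp + z) ∈ P := by
  intro z h1 h2 h3
  set u : Z2 := zq - zp with hu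
  set v : Z2 := zr - zp with hv
  have heR : (0 : ℝ) < (e : ℝ) := by exact_mod_cast hepos
  set α : ℝ := (dt z v : ℝ) / (e : ℝ) with hα
  set β : ℝ := (dt u z : ℝ) / (e : ℝ) with hβ
  have hα0 : 0 ≤ α := div_nonneg (by exact_mod_cast h1) heR.le
  have hβ0 : 0 ≤ β := div_nonneg (by exact_mod_cast h2) heR.le
  have hαβ : α + β ≤ 1 := by
    rw [hα, hβ, ← add_div, div_le_one heR]
    exact_mod_cast h3
  have hkey : ci (zp + z) = (1 - α - β) • ci zp + α • ci zq + β • ci zr := by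
    funext i
    have hcram := dt_cramer u v z i
    have hcast : (e : ℝ) * (z i : ℝ) = (dt z v : ℝ) * ((u i : ℤ) : ℝ)
        + (dt u z : ℝ) * ((v i : ℤ) : ℝ) := by
      rw [he]
      push_cast
      exact_mod_cast congrArg (fun t : ℤ => (t : ℝ)) (by rw [← he] at hcram ⊢; exact hcram)
    have hzi : (z i : ℝ) = α * (u i : ℤ) + β * (v i : ℤ) := by
      rw [hα, hβ]
      field_simp
      linarith [hcast]
    have hui : ((u i : ℤ) : ℝ) = (zq i : ℝ) - (zp i : ℝ) := by
      rw [hu]; push_cast; simp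
    have hvi : ((v i : ℤ) : ℝ) = (zr i : ℝ) - (zp i : ℝ) := by
      rw [hv]; push_cast; simp
    simp only [ci, Pi.add_apply, Pi.smul_apply, smul_eq_mul]
    push_cast
    rw [hzi, hui, hvi]
    ring
  rw [hkey]
  exact combo3 hP hp hq hr (by linarith) hα0 hβ0 (by ring)

lemma ext2 {α : Type*} {x y : Fin 2 → α} (h0 : x 0 = y 0) (h1 : x 1 = y 1) : x = y :=
  funext (Fin.forall_fin_two.mpr ⟨h0, h1⟩)

/-- a 2-dimensional set contains an affinely independent (integer-determinant) triple -/
lemma exists_indep {A : Set V2}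
    (h2 : Module.finrank ℝ (affineSpan ℝ A).direction = 2) :
    ∃ x ∈ A, ∃ y ∈ A, ∃ z ∈ A,
      (y 0 - x 0) * (z 1 - x 1) - (y 1 - x 1) * (z 0 - x 0) ≠ 0 := by
  by_contra hcon
  push_neg at hcon
  rw [direction_affineSpan] at h2
  have hne : A.Nonempty := by
    rcases A.eq_empty_or_nonempty with h | h
    · rw [h, vectorSpan_empty] at h2; simp at h2
    · exact h
  obtain ⟨x₀, hx₀⟩ := hne
  have key : ∀ w : V2, w ≠ 0 →
      (∀ a ∈ A, (w 0) * (a 1 - x₀ 1) - (w 1) * (a 0 - x₀ 0) = 0) → False := by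
    intro w hwne hdall
    have hspan : ∀ a ∈ A, a - x₀ ∈ Submodule.span ℝ {w} := by
      intro a ha
      rw [Submodule.mem_span_singleton]
      have hd := hdall a ha
      by_cases hw0 : w 0 = 0
      · have hw1 : w 1 ≠ 0 := by
          intro h1
          exact hwne (ext2 (by simp [hw0]) (by simp [h1]))
        refine ⟨(a 1 - x₀ 1) / w 1, ext2 ?_ ?_⟩
        · simp only [Pi.smul_apply, smul_eq_mul, Pi.sub_apply, hw0, mul_zero]
          rw [hw0] at hd
          have hprod : w 1 * (a 0 - x₀ 0) = 0 := by linarith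
          rcases mul_eq_zero.mp hprod with h | h
          · exact absurd h hw1
          · linarith
        · simp only [Pi.smul_apply, smul_eq_mul, Pi.sub_apply]
          field_simp
      · refine ⟨(a 0 - x₀ 0) / w 0, ext2 ?_ ?_⟩
        · simp only [Pi.smul_apply, smul_eq_mul, Pi.sub_apply]
          field_simp
        · simp only [Pi.smul_apply, smul_eq_mul, Pi.sub_apply]
          rw [div_mul_eq_mul_div, div_eq_iff hw0]
          linear_combination -hd
    have hle : vectorSpan ℝ A ≤ Submodule.span ℝ {w} := by
      rw [vectorSpan_def]
      rw [Submodule.span_le]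
      rintro d ⟨a, ha, b, hb, rfl⟩
      have hmem := sub_mem (hspan a ha) (hspan b hb)
      have heq : (a - x₀) - (b - x₀) = a -ᵥ b := by rw [vsub_eq_sub]; abel
      rwa [heq] at hmem
    have hfr : Module.finrank ℝ (vectorSpan ℝ A) ≤
        Module.finrank ℝ (Submodule.span ℝ ({w} : Set V2)) := Submodule.finrank_mono hle
    rw [finrank_span_singleton hwne, h2] at hfr
    omega
  by_cases hsub : ∃ y₀ ∈ A, y₀ ≠ x₀
  · obtain ⟨y₀, hy₀, hy₀ne⟩ := hsub
    refine key (y₀ - x₀) (sub_ne_zero.mpr hy₀ne) fun a ha => ?_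
    have := hcon x₀ hx₀ y₀ hy₀ a ha
    simpa using this
  · push_neg at hsub
    have hA1 : A ⊆ {x₀} := fun y hy => hsub y hy
    have hle : vectorSpan ℝ A ≤ vectorSpan ℝ ({x₀} : Set V2) := vectorSpan_mono ℝ hA1
    rw [vectorSpan_singleton] at hle
    have : vectorSpan ℝ A = ⊥ := le_bot_iff.mp hle
    rw [this] at h2
    simp at h2

lemma lat_rep {x : V2} (hx : x ∈ LatticePts 2) : ∃ z : Z2, ci z = x := by
  refine ⟨fun i => (hx i).choose, funext fun i => ?_⟩
  exact ((hx i).choose_spec).symm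

def zmap (p q r s : ℤ) (t : Z2) (z : Z2) : Z2 :=
  ![p * z 0 + q * z 1 + t 0, r * z 0 + s * z 1 + t 1]

def zinv (p q r s : ℤ) (t : Z2) (w : Z2) : Z2 :=
  ![s * (w 0 - t 0) - q * (w 1 - t 1), -r * (w 0 - t 0) + p * (w 1 - t 1)]

lemma zmap_zinv (p q r s : ℤ) (hdet : p * s - q * r = 1) (t w : Z2) :
    zmap p q r s t (zinv p q r s t w) = w := by
  refine ext2 ?_ ?_ <;>
    simp only [zmap, zinv, Matrix.cons_val_zero, Matrix.cons_val_one, Matrix.head_cons]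
  · linear_combination (w 0 - t 0) * hdet
  · linear_combination (w 1 - t 1) * hdet

def rlin (p q r s : ℝ) : V2 →ₗ[ℝ] V2 where
  toFun x := ![p * x 0 + q * x 1, r * x 0 + s * x 1]
  map_add' x y := ext2
    (by simp only [Matrix.cons_val_zero, Pi.add_apply]; ring)
    (by simp only [Matrix.cons_val_one, Matrix.head_cons, Matrix.cons_val_zero, Pi.add_apply]; ring)
  map_smul' c x := ext2
    (by simp only [Matrix.cons_val_zero, Pi.smul_apply, smul_eq_mul, RingHom.id_apply]; ring)
    (by simp only [Matrix.cons_val_one, Matrix.head_cons, Matrix.cons_val_zero, Pi.smul_apply, smul_eq_mul,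
        RingHom.id_apply]; ring)

lemma rlin_apply (p q r s : ℝ) (x : V2) :
    rlin p q r s x = ![p * x 0 + q * x 1, r * x 0 + s * x 1] := rfl

noncomputable def rlequiv (p q r s : ℤ) (hdet : p * s - q * r = 1) : V2 ≃ₗ[ℝ] V2 := by
  have h : (p : ℝ) * s - q * r = 1 := by exact_mod_cast congrArg (Int.cast : ℤ → ℝ) hdet
  refine LinearEquiv.ofLinear (rlin p q r s) (rlin s (-q) (-r) p) ?_ ?_ <;>
  · refine LinearMap.ext fun x => ext2 ?_ ?_ <;>
      simp only [LinearMap.comp_apply, rlin_apply, LinearMap.id_apply,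
        Matrix.cons_val_zero, Matrix.cons_val_one, Matrix.head_cons]
    · linear_combination (x 0) * h
    · linear_combination (x 1) * h

noncomputable def raff (p q r s : ℤ) (hdet : p * s - q * r = 1) (t : Z2) : V2 ≃ᵃ[ℝ] V2 :=
  (rlequiv p q r s hdet).toAffineEquiv.trans (AffineEquiv.constVAdd ℝ V2 (ci t))

lemma raff_ci (p q r s : ℤ) (hdet : p * s - q * r = 1) (t z : Z2) :
    raff p q r s hdet t (ci z) = ci (zmap p q r s t z) := by
  refine ext2 ?_ ?_ <;>
    simp only [raff, AffineEquiv.trans_apply, AffineEquiv.constVAdd_apply,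
      LinearEquiv.coe_toAffineEquiv, rlequiv, LinearEquiv.ofLinear_apply, rlin_apply,
      vadd_eq_add, Pi.add_apply, ci, zmap, Matrix.cons_val_zero, Matrix.cons_val_one,
      Matrix.head_cons] <;> push_cast <;> ring


lemma coord_bound {g h2v e X Y a'' : ℤ} (hgpos : 0 < g) (hhpos : 0 < h2v) (hgh : g * h2v = e)
    (ha''0 : 0 ≤ a'') (ha''lt : a'' < h2v)
    (habs1 : |g * X| ≤ e) (habs2 : |Y * h2v - X * a''| ≤ e) :
    |X| ≤ e ∧ |Y| ≤ e := by
  have hXb : |X| ≤ h2v := by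
    have h1 : g * |X| = |g * X| := by rw [abs_mul, abs_of_pos hgpos]
    have h2 : g * |X| ≤ g * h2v := by rw [h1, hgh]; exact habs1
    exact le_of_mul_le_mul_left h2 hgpos
  have h5 : (0:ℤ) ≤ (g - 1) * (h2v - 1) :=
    mul_nonneg (by linarith) (by linarith)
  have h6 : g + h2v - 1 ≤ e := by nlinarith
  have h7 : h2v ≤ e := by nlinarith
  refine ⟨le_trans hXb h7, ?_⟩
  have h1 : |Y * h2v| ≤ e + |X * a''| := by
    calc |Y * h2v| = |(Y * h2v - X * a'') + X * a''| := by congr 1; ring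
    _ ≤ |Y * h2v - X * a''| + |X * a''| := abs_add_le _ _
    _ ≤ e + |X * a''| := add_le_add habs2 le_rfl
  have h2 : |X * a''| ≤ h2v * (h2v - 1) := by
    rw [abs_mul, abs_of_nonneg ha''0]
    have hle1 : |X| * a'' ≤ h2v * a'' := mul_le_mul_of_nonneg_right hXb ha''0
    have hle2 : h2v * a'' ≤ h2v * (h2v - 1) :=
      mul_le_mul_of_nonneg_left (by omega) hhpos.le
    linarith
  have h3 : |Y| * h2v ≤ (g + h2v - 1) * h2v := by
    have heq : e + h2v * (h2v - 1) = (g + h2v - 1) * h2v := by linear_combination -hgh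
    calc |Y| * h2v = |Y * h2v| := by rw [abs_mul, abs_of_pos hhpos]
    _ ≤ e + |X * a''| := h1
    _ ≤ e + h2v * (h2v - 1) := by linarith
    _ = (g + h2v - 1) * h2v := heq
  have h4 : |Y| ≤ g + h2v - 1 := le_of_mul_le_mul_right h3 hhpos
  linarith

lemma polyequiv_raff (p q r s : ℤ) (hdet : p * s - q * r = 1) (t : Z2) (P : Set V2) :
    PolyEquiv P ((raff p q r s hdet t : V2 → V2) '' P) := by
  classical
  set e := raff p q r s hdet t with he
  have hcoe : (e.toAffineMap : V2 → V2) = (e : V2 → V2) := by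
    ext x; simp
  refine ⟨e.toAffineMap, ?_, by rw [hcoe]⟩
  have hspan : affineSpan ℝ ((e : V2 → V2) '' P) = (affineSpan ℝ P).map e.toAffineMap := by
    rw [AffineSubspace.map_span e.toAffineMap P, hcoe]
  have hlat1 : ∀ x ∈ LatticePts 2, e x ∈ LatticePts 2 := by
    intro x hx
    obtain ⟨z, rfl⟩ := lat_rep hx
    rw [he, raff_ci]
    exact ci_lat _
  have hlat2 : ∀ y ∈ LatticePts 2, e.symm y ∈ LatticePts 2 := by
    intro y hy
    obtain ⟨w, rfl⟩ := lat_rep hy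
    have h1 : e (ci (zinv p q r s t w)) = ci w := by
      rw [he, raff_ci, zmap_zinv p q r s hdet]
    rw [← h1, AffineEquiv.symm_apply_apply]
    exact ci_lat _
  refine ⟨?_, ?_, ?_⟩
  · rintro x ⟨hx1, hx2⟩
    refine ⟨?_, by rw [hcoe]; exact hlat1 x hx2⟩
    rw [hspan]
    exact AffineSubspace.mem_map.mpr ⟨x, hx1, rfl⟩
  · intro x _ y _ hxy
    rw [hcoe] at hxy
    exact e.injective hxy
  · rintro y ⟨hy1, hy2⟩
    rw [hspan] at hy1
    obtain ⟨x, hx, hfx⟩ := AffineSubspace.mem_map.mp hy1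
    have hxeq : e.symm y = x := by
      rw [← hfx, hcoe, AffineEquiv.symm_apply_apply]
    refine ⟨x, ⟨hx, ?_⟩, hfx⟩
    rw [← hxeq]
    exact hlat2 y hy2


end
end PolygonAux


/-- For a fixed nonnegative integer N and a finite family 𝓕 of rational pointed
2-dimensional cones, there are, up to integral equivalence, only finitely many
lattice polygons with exactly N+1 lattice points all of whose normal cones at
vertices are integrally equivalent to cones of 𝓕. -/
theorem finitely_many_polygons_with_normal_cones_in_family (N : ℕ)
    (𝓕 : Set (Set (Fin 2 → ℝ))) (h𝓕fin : 𝓕.Finite)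
    (h𝓕 : ∀ σ ∈ 𝓕, IsRationalCone σ ∧ IsPointedCone σ ∧ coneDim σ = 2) :
    ∃ S : Set (Set (Fin 2 → ℝ)), S.Finite ∧
      ∀ P : Set (Fin 2 → ℝ),
        IsLatticePolytope P → polyDim P = 2 →
        (P ∩ LatticePts 2).ncard = N + 1 →
        (∀ u ∈ Set.extremePoints ℝ P, ∃ σ ∈ 𝓕, ConeEquiv (normalCone P u) σ) →
        ∃ Q ∈ S, PolyEquiv P Q := by
  classical
  open PolygonAux in
  set Emax : ℤ := 4 * (N + 1 : ℤ) ^ 2 with hEmax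
  set M : ℤ := 2 * Emax + 2 with hMdef
  set box : Finset Z2 := Finset.Icc (fun _ => (0:ℤ)) (fun _ => M) with hbox
  refine ⟨(fun B : Finset Z2 => convexHull ℝ (ci '' (B : Set Z2))) '' (box.powerset : Set (Finset Z2)),
    (box.powerset.finite_toSet).image _, ?_⟩
  intro P hPoly hdim hcard _
  obtain ⟨V, hVfin, hVne, hVlat, hPV⟩ := hPoly
  set A : Set V2 := P ∩ LatticePts 2 with hA
  have hVA : V ⊆ A := fun v hv => ⟨hPV ▸ subset_convexHull ℝ V hv, hVlat hv⟩
  have hPA : P = convexHull ℝ A := by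
    refine le_antisymm ?_ ?_
    · rw [hPV]; exact convexHull_mono hVA
    · exact convexHull_min Set.inter_subset_left (hPV ▸ convex_convexHull ℝ V)
  have hconv : Convex ℝ P := hPA ▸ convex_convexHull ℝ A
  have hAfin : A.Finite := Set.finite_of_ncard_ne_zero (by rw [hcard]; omega)
  -- integer points of P
  set Az : Set Z2 := ci ⁻¹' A with hAzdef
  have hAz : ci '' Az = A := by
    apply le_antisymm
    · rintro x ⟨z, hz, rfl⟩; exact hz
    · rintro x hx
      obtain ⟨z, rfl⟩ := lat_rep hx.2
      exact ⟨z, hx, rfl⟩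
  have hAzP : ∀ z ∈ Az, ci z ∈ P := fun z hz => hz.1
  have hAzfin : Az.Finite := hAfin.preimage ci_inj.injOn
  have hmemAz : ∀ z : Z2, ci z ∈ P → z ∈ Az := fun z hz => ⟨hz, ci_lat z⟩
  -- a nondegenerate triple
  have hdim' : Module.finrank ℝ (affineSpan ℝ A).direction = 2 := by
    have : affineSpan ℝ P = affineSpan ℝ A := by rw [hPA, affineSpan_convexHull]
    rw [← this]
    exact hdim
  obtain ⟨x, hx, y, hy, z, hz, hxyz⟩ := exists_indep hdim'
  obtain ⟨zx, rfl⟩ := lat_rep hx.2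
  obtain ⟨zy, rfl⟩ := lat_rep hy.2
  obtain ⟨zz, rfl⟩ := lat_rep hz.2
  have hdt0 : dt (zy - zx) (zz - zx) ≠ 0 := by
    intro h0
    apply hxyz
    have : ((dt (zy - zx) (zz - zx) : ℤ) : ℝ) = 0 := by exact_mod_cast h0
    simp only [dt, Pi.sub_apply] at this
    push_cast at this
    simp only [ci]
    linarith [this]
  -- maximal triple
  set T3 : Finset (Z2 × Z2 × Z2) := (hAzfin.prod (hAzfin.prod hAzfin)).toFinset with hT3
  have hT3ne : T3.Nonempty := ⟨(zx, zy, zz), by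
    rw [hT3, Set.Finite.mem_toFinset]
    exact ⟨hmemAz _ hx.1, hmemAz _ hy.1, hmemAz _ hz.1⟩⟩
  obtain ⟨⟨zp, zq0, zr0⟩, hmemT, hmax⟩ :=
    T3.exists_max_image (fun w => (dt (w.2.1 - w.1) (w.2.2 - w.1)).natAbs) hT3ne
  have hmemT' : zp ∈ Az ∧ zq0 ∈ Az ∧ zr0 ∈ Az := by
    rwa [hT3, Set.Finite.mem_toFinset] at hmemT
  set E : ℕ := (dt (zq0 - zp) (zr0 - zp)).natAbs with hE
  have hmax' : ∀ w1 ∈ Az, ∀ w2 ∈ Az, ∀ w3 ∈ Az, |dt (w2 - w1) (w3 - w1)| ≤ (E : ℤ) := by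
    intro w1 h1 w2 h2 w3 h3
    have := hmax (w1, w2, w3) (by rw [hT3, Set.Finite.mem_toFinset]; exact ⟨h1, h2, h3⟩)
    rw [Int.abs_eq_natAbs]
    exact_mod_cast this
  have hEpos : 0 < (E : ℤ) := by
    have h1 := hmax (zx, zy, zz)
      (by rw [hT3, Set.Finite.mem_toFinset]; exact ⟨hmemAz _ hx.1, hmemAz _ hy.1, hmemAz _ hz.1⟩)
    have h2 : 0 < (dt (zy - zx) (zz - zx)).natAbs := Int.natAbs_pos.mpr hdt0
    have : 0 < E := lt_of_lt_of_le h2 h1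
    exact_mod_cast this
  -- orientation
  obtain ⟨zq, zr, hzq, hzr, he⟩ :
      ∃ zq zr, zq ∈ Az ∧ zr ∈ Az ∧ dt (zq - zp) (zr - zp) = (E : ℤ) := by
    rcases abs_cases (dt (zq0 - zp) (zr0 - zp)) with ⟨h1, -⟩ | ⟨h1, -⟩
    · exact ⟨zq0, zr0, hmemT'.2.1, hmemT'.2.2, by
        rw [← h1, Int.abs_eq_natAbs, hE]⟩
    · refine ⟨zr0, zq0, hmemT'.2.2, hmemT'.2.1, ?_⟩
      rw [dt_swap, ← h1, Int.abs_eq_natAbs, hE]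
  set u : Z2 := zq - zp with hu
  set v : Z2 := zr - zp with hv
  set e : ℤ := (E : ℤ) with heE
  have hedt : e = dt u v := he.symm
  have hepos : 0 < e := hEpos
  -- counting bound
  have hebound : e ≤ Emax := by
    have := count_bound u v zp hedt hepos
      (triangle_subset hconv zp zq zr (hAzP _ hmemT'.1) (hAzP _ hzq) (hAzP _ hzr) hedt hepos)
      (N + 1) hcard hAfin
    rw [hEmax]
    calc e ≤ 4 * ((N : ℤ) + 1) ^ 2 := by exact_mod_cast this
    _ = 4 * (N + 1 : ℤ) ^ 2 := by push_cast; ring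
  -- gcd normalization
  have hune : ¬(u 0 = 0 ∧ u 1 = 0) := by
    rintro ⟨h0, h1⟩
    rw [hedt] at hepos
    simp only [dt, h0, h1] at hepos
    omega
  set g : ℤ := (Int.gcd (u 0) (u 1) : ℤ) with hg
  have hgpos : 0 < g := by
    rw [hg]
    exact_mod_cast Int.gcd_pos_iff.mpr (by tauto)
  obtain ⟨c₀, hc₀⟩ : g ∣ u 0 := Int.gcd_dvd_left (u 0) (u 1)
  obtain ⟨c₁, hc₁⟩ : g ∣ u 1 := Int.gcd_dvd_right (u 0) (u 1)
  set a : ℤ := Int.gcdA (u 0) (u 1) with ha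
  set b : ℤ := Int.gcdB (u 0) (u 1) with hb
  have hbez : g = u 0 * a + u 1 * b := Int.gcd_eq_gcd_ab (u 0) (u 1)
  have habc : c₀ * a + c₁ * b = 1 := by
    have h1 : g * (c₀ * a + c₁ * b) = g * 1 := by
      rw [mul_one]
      linear_combination -hbez - a * hc₀ - b * hc₁
    exact mul_left_cancel₀ (ne_of_gt hgpos) h1
  set h2v : ℤ := c₀ * v 1 - c₁ * v 0 with hh2v
  set a₂ : ℤ := a * v 0 + b * v 1 with ha₂
  have hgh : g * h2v = e := by
    rw [hedt]
    simp only [dt, hh2v]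
    linear_combination -v 1 * hc₀ + v 0 * hc₁
  have hhpos : 0 < h2v := by nlinarith [hgpos, hepos, hgh]
  set k2 : ℤ := a₂ / h2v with hk2
  set a'' : ℤ := a₂ % h2v with ha''
  have ha''eq : a'' = a₂ - h2v * k2 := Int.emod_def a₂ h2v
  have ha''0 : 0 ≤ a'' := Int.emod_nonneg a₂ (ne_of_gt hhpos)
  have ha''lt : a'' < h2v := Int.emod_lt_of_pos a₂ hhpos
  -- the unimodular transformation
  set p' : ℤ := a + k2 * c₁ with hp'
  set q' : ℤ := b - k2 * c₀ with hq'
  set r' : ℤ := -c₁ with hr'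
  set s' : ℤ := c₀ with hs'
  have hdet' : p' * s' - q' * r' = 1 := by
    rw [hp', hq', hr', hs']
    linear_combination habc
  set M₀ : ℤ := e + 1 with hM₀
  set t' : Z2 := ![M₀ - (p' * zp 0 + q' * zp 1), M₀ - (r' * zp 0 + s' * zp 1)] with ht'
  -- coordinate bounds for images of integer points of P
  have hbound : ∀ z ∈ Az, (0 ≤ zmap p' q' r' s' t' z 0 ∧ zmap p' q' r' s' t' z 0 ≤ M) ∧
      (0 ≤ zmap p' q' r' s' t' z 1 ∧ zmap p' q' r' s' t' z 1 ≤ M) := by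
    intro z hzmem
    set w0 : ℤ := z 0 - zp 0 with hw0
    set w1 : ℤ := z 1 - zp 1 with hw1
    set X : ℤ := r' * w0 + s' * w1 with hX
    set Y : ℤ := p' * w0 + q' * w1 with hY
    have habs1 : |dt u (z - zp)| ≤ e := hmax' zp hmemT'.1 zq hzq z hzmem
    have habs2 : |dt (z - zp) v| ≤ e := hmax' zp hmemT'.1 z hzmem zr hzr
    have hXe : g * X = dt u (z - zp) := by
      simp only [dt, hX, hr', hs', hw0, hw1, Pi.sub_apply]
      linear_combination -(z 1 - zp 1) * hc₀ + (z 0 - zp 0) * hc₁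
    have hYe : Y * h2v - X * a'' = dt (z - zp) v := by
      rw [ha''eq]
      simp only [dt, hY, hX, hp', hq', hr', hs', ha₂, hh2v, hw0, hw1, Pi.sub_apply]
      linear_combination ((z 0 - zp 0) * v 1 - (z 1 - zp 1) * v 0) * habc
    obtain ⟨hXb', hYb⟩ : |X| ≤ e ∧ |Y| ≤ e := by
      refine coord_bound hgpos hhpos hgh ha''0 ha''lt ?_ ?_
      · rw [hXe]; exact habs1
      · rw [hYe]; exact habs2
    have hz0 : zmap p' q' r' s' t' z 0 = Y + M₀ := by
      simp only [zmap, ht', Matrix.cons_val_zero, hY, hw0, hw1]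
      ring
    have hz1 : zmap p' q' r' s' t' z 1 = X + M₀ := by
      simp only [zmap, ht', Matrix.cons_val_one, Matrix.head_cons, Matrix.cons_val_zero, hX, hw0, hw1]
      ring
    have hYabs := abs_le.mp hYb
    have hXabs := abs_le.mp hXb'
    rw [hz0, hz1]
    refine ⟨⟨?_, ?_⟩, ?_, ?_⟩ <;> rw [hM₀] <;> rw [hMdef] at * <;> linarith [hebound]
  -- the image polytope
  set ψ : Z2 → Z2 := zmap p' q' r' s' t' with hψ
  set eaff := raff p' q' r' s' hdet' t' with heaff
  have hcoe : (eaff.toAffineMap : V2 → V2) = (eaff : V2 → V2) := by ext x; simp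
  set Q : Set V2 := (eaff : V2 → V2) '' P with hQ
  have hPQ : PolyEquiv P Q := polyequiv_raff p' q' r' s' hdet' t' P
  set Bfin : Finset Z2 := Finset.image ψ hAzfin.toFinset with hBfin
  have hQeq : Q = convexHull ℝ (ci '' (Bfin : Set Z2)) := by
    have h1 : (eaff : V2 → V2) '' P = convexHull ℝ ((eaff : V2 → V2) '' A) := by
      conv_lhs => rw [hPA]
      rw [← hcoe]
      exact AffineMap.image_convexHull eaff.toAffineMap A
    have h2 : (eaff : V2 → V2) '' A = ci '' (Bfin : Set Z2) := by
      rw [← hAz, hBfin, Finset.coe_image, Set.Finite.coe_toFinset,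
        ← Set.image_comp, ← Set.image_comp]
      apply Set.image_congr
      intro z _
      show eaff (ci z) = ci (ψ z)
      rw [heaff, hψ]
      exact raff_ci p' q' r' s' hdet' t' z
    rw [hQ, h1, h2]
  have hBsub : Bfin ∈ box.powerset := by
    rw [Finset.mem_powerset]
    intro w hw
    rw [hBfin, Finset.mem_image] at hw
    obtain ⟨z, hzmem, rfl⟩ := hw
    have hz' : z ∈ Az := (Set.Finite.mem_toFinset _).mp hzmem
    obtain ⟨⟨hb1, hb2⟩, hb3, hb4⟩ := hbound z hz'
    rw [hbox, Finset.mem_Icc]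
    constructor
    · exact Pi.le_def.mpr (Fin.forall_fin_two.mpr ⟨hb1, hb3⟩)
    · exact Pi.le_def.mpr (Fin.forall_fin_two.mpr ⟨hb2, hb4⟩)
  exact ⟨Q, ⟨Bfin, Finset.mem_coe.mpr hBsub, hQeq.symm⟩, hPQ⟩
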